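/- arXiv:1412.4100 — 2 statements merged into one kernel-verified Lean document; each statement's English description precedes it below -/
import Mathlib

section
/- If v₀ is any vertex in a tree T with non-negative vertex weights and P = (v₀,…,v_k) is a path of maximum total weight among all paths starting at v₀, then there exists a path of maximum total weight in T (among all paths) that starts at v_k. -/
/-- The weight of a walk: sum of the weights of its vertices. -/
def walkWeight {V : Type*} {G : SimpleGraph V} (w : V → ℝ) {u v : V}
    (p : G.Walk u v) : ℝ := (p.support.map w).sum

namespace StmtAux

open SimpleGraph Walk

variable {V : Type*} {T : SimpleGraph V}

lemma walkWeight_reverse (w : V → ℝ) {u v : V} (p : T.Walk u v) :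
    walkWeight w p.reverse = walkWeight w p := by
  simp [walkWeight, SimpleGraph.Walk.support_reverse, List.map_reverse, List.sum_reverse]

lemma walkWeight_append (w : V → ℝ) {a m b : V} (p : T.Walk a m) (q : T.Walk m b) :
    walkWeight w (p.append q) = walkWeight w p + walkWeight w q - w m := by
  unfold walkWeight
  rw [SimpleGraph.Walk.support_append, List.map_append, List.sum_append]
  have h : q.support = m :: q.support.tail := q.support_eq_cons
  rw [h]
  simp only [List.tail_cons, List.map_cons, List.sum_cons]
  ring

lemma le_walkWeight (w : V → ℝ) (hw : ∀ v, 0 ≤ w v) {u v x : V} (p : T.Walk u v)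
    (hx : x ∈ p.support) : w x ≤ walkWeight w p :=
  List.single_le_sum (fun y hy => by
    obtain ⟨z, _, rfl⟩ := List.mem_map.1 hy; exact hw z) _ (List.mem_map_of_mem (f := w) hx)

lemma twice_le_walkWeight (w : V → ℝ) (hw : ∀ v, 0 ≤ w v) {u v : V} (p : T.Walk u v) :
    w u + w v ≤ 2 * walkWeight w p := by
  have h1 := le_walkWeight w hw p p.start_mem_support
  have h2 := le_walkWeight w hw p p.end_mem_support
  linarith

lemma append_isPath {a m b : V} {p : T.Walk a m} {q : T.Walk m b}
    (hp : p.IsPath) (hq : q.IsPath)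
    (hdisj : ∀ x ∈ p.support, x ∈ q.support → x = m) : (p.append q).IsPath := by
  rw [SimpleGraph.Walk.isPath_def, SimpleGraph.Walk.support_append]
  rw [List.nodup_append]
  refine ⟨hp.support_nodup, ?_, ?_⟩
  · exact hq.support_nodup.tail
  · intro x hx1 y hx2 hxy; subst hxy
    have hxq : x ∈ q.support := by
      rw [q.support_eq_cons]; exact List.mem_cons_of_mem _ hx2
    have hxm : x = m := hdisj x hx1 hxq
    subst hxm
    have hnd := hq.support_nodup
    rw [q.support_eq_cons] at hnd
    exact (List.nodup_cons.1 hnd).1 hx2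

lemma disjoint_of_append_isPath {a m b : V} {p : T.Walk a m} {q : T.Walk m b}
    (h : (p.append q).IsPath) : ∀ x ∈ p.support, x ∈ q.support → x = m := by
  intro x hx1 hx2
  rw [SimpleGraph.Walk.isPath_def, SimpleGraph.Walk.support_append, List.nodup_append] at h
  rw [q.support_eq_cons, List.mem_cons] at hx2
  rcases hx2 with rfl | hx2
  · rfl
  · exact (h.2.2 _ hx1 _ hx2 rfl).elim

section Tree

variable [DecidableEq V] (hT : T.IsTree)

/-- The unique path between two vertices in a tree. -/
noncomputable def pth (x y : V) : T.Walk x y := (hT.existsUnique_path x y).choose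

lemma pth_isPath (x y : V) : (pth hT x y).IsPath := (hT.existsUnique_path x y).choose_spec.1

lemma pth_eq {x y : V} (p : T.Walk x y) (hp : p.IsPath) : p = pth hT x y :=
  (hT.existsUnique_path x y).choose_spec.2 p hp

lemma pth_reverse (x y : V) : pth hT y x = (pth hT x y).reverse :=
  (pth_eq hT _ (pth_isPath hT x y).reverse).symm

lemma walkWeight_pth_symm (w : V → ℝ) (x y : V) :
    walkWeight w (pth hT y x) = walkWeight w (pth hT x y) := by
  rw [pth_reverse, walkWeight_reverse]

lemma pth_split {x y m : V} (hm : m ∈ (pth hT x y).support) :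
    pth hT x y = (pth hT x m).append (pth hT m y) := by
  have hs := SimpleGraph.Walk.take_spec (pth hT x y) hm
  have h1 : (pth hT x y).takeUntil m hm = pth hT x m :=
    pth_eq hT _ ((pth_isPath hT x y).takeUntil hm)
  have h2 : (pth hT x y).dropUntil m hm = pth hT m y :=
    pth_eq hT _ ((pth_isPath hT x y).dropUntil hm)
  rw [h1, h2] at hs
  exact hs.symm

lemma pth_weight_split (w : V → ℝ) {x y m : V} (hm : m ∈ (pth hT x y).support) :
    walkWeight w (pth hT x y) =
      walkWeight w (pth hT x m) + walkWeight w (pth hT m y) - w m := by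
  rw [pth_split hT hm, walkWeight_append]

lemma pth_support_split_left {x y m : V} (hm : m ∈ (pth hT x y).support) :
    (pth hT x m).support ⊆ (pth hT x y).support := by
  rw [pth_split hT hm]
  exact fun x hx => SimpleGraph.Walk.subset_support_append_left _ _ hx

lemma pth_support_split_right {x y m : V} (hm : m ∈ (pth hT x y).support) :
    (pth hT m y).support ⊆ (pth hT x y).support := by
  rw [pth_split hT hm]
  exact fun x hx => SimpleGraph.Walk.subset_support_append_right _ _ hx

lemma pth_split_disjoint {x y m : V} (hm : m ∈ (pth hT x y).support) :
    ∀ c ∈ (pth hT x m).support, c ∈ (pth hT m y).support → c = m := by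
  have h := pth_isPath hT x y
  rw [pth_split hT hm] at h
  exact disjoint_of_append_isPath h

/-- First-meeting lemma: given a path `p` from `z` to `x` with `x ∈ S`, there is an
initial segment of `p` ending at the first vertex of `S` encountered. -/
lemma firstMeet (S : Set V) :
    ∀ {z x : V} (p : T.Walk z x), p.IsPath → x ∈ S →
      ∃ (d : V) (r : T.Walk z d), d ∈ S ∧ r.IsPath ∧ (∀ y, y ∈ r.support → y ∈ p.support) ∧
        (∀ y ∈ r.support, y ∈ S → y = d) := by
  intro z x p
  induction p with
  | nil =>
    intro _ hx
    exact ⟨_, SimpleGraph.Walk.nil, hx, SimpleGraph.Walk.IsPath.nil, fun y hy => hy,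
      fun y hy _ => by simpa using hy⟩
  | @cons z z' x h p' ih =>
    intro hp hx
    by_cases hz : z ∈ S
    · refine ⟨z, SimpleGraph.Walk.nil, hz, SimpleGraph.Walk.IsPath.nil, ?_, ?_⟩
      · intro y hy
        simp only [SimpleGraph.Walk.support_nil, List.mem_singleton] at hy
        subst hy
        exact SimpleGraph.Walk.start_mem_support _
      · intro y hy _
        simpa using hy
    · have hcons := (SimpleGraph.Walk.cons_isPath_iff h p').1 hp
      obtain ⟨d, r, hd, hr, hsub, hfirst⟩ := ih hcons.1 hx
      refine ⟨d, SimpleGraph.Walk.cons h r, hd, ?_, ?_, ?_⟩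
      · exact hr.cons (fun hc => hcons.2 (hsub z hc))
      · intro y hy
        rw [SimpleGraph.Walk.support_cons, List.mem_cons] at hy ⊢
        rcases hy with rfl | hy
        · exact Or.inl rfl
        · exact Or.inr (hsub y hy)
      · intro y hy hyS
        rw [SimpleGraph.Walk.support_cons, List.mem_cons] at hy
        rcases hy with rfl | hy
        · exact absurd hyS hz
        · exact hfirst y hy hyS

end Tree

end StmtAux

theorem stmt_0 {V : Type*} [Fintype V] (T : SimpleGraph V) (hT : T.IsTree)
    (w : V → ℝ) (hw : ∀ v, 0 ≤ w v) (v₀ vk : V) (P : T.Walk v₀ vk)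
    (hP : P.IsPath)
    (hmax : ∀ (u : V) (Q : T.Walk v₀ u), Q.IsPath → walkWeight w Q ≤ walkWeight w P) :
    ∃ (u : V) (Q : T.Walk vk u), Q.IsPath ∧
      ∀ (a b : V) (R : T.Walk a b), R.IsPath → walkWeight w R ≤ walkWeight w Q := by
  classical
  open StmtAux in
  -- notation
  have hne : Nonempty V := ⟨v₀⟩
  set F : V → V → ℝ := fun x y => walkWeight w (pth hT x y) with hF
  -- hmax reformulated
  have hP' : P = pth hT v₀ vk := pth_eq hT P hP
  have hmax' : ∀ u : V, F v₀ u ≤ F v₀ vk := by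
    intro u
    have := hmax u (pth hT v₀ u) (pth_isPath hT v₀ u)
    rwa [hP'] at this
  -- the key claim: for all a b, F a b ≤ F vk a ⊔ F vk b
  have key : ∀ a b : V, F a b ≤ max (F vk a) (F vk b) := by
    intro a b
    -- c : first vertex of the path vk → a lying on the path a → b
    obtain ⟨c, q, hcS, hq, hqsub, hqfirst⟩ :=
      firstMeet {x | x ∈ (pth hT a b).support} (pth hT vk a) (pth_isPath hT vk a)
        (show a ∈ (pth hT a b).support from SimpleGraph.Walk.start_mem_support _)
    -- q : T.Walk vk c, q is pth vk c
    have hq' : q = pth hT vk c := pth_eq hT q hq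
    -- supports of pth a c and pth c b inside pth a b
    have hca : c ∈ (pth hT a b).support := hcS
    have hsplit_ab : F a b = F a c + F c b - w c := pth_weight_split hT w hca
    have hsub_ac : (pth hT a c).support ⊆ (pth hT a b).support := pth_support_split_left hT hca
    have hsub_cb : (pth hT c b).support ⊆ (pth hT a b).support := pth_support_split_right hT hca
    have hdisj_ac_cb : ∀ x ∈ (pth hT a c).support, x ∈ (pth hT c b).support → x = c :=
      pth_split_disjoint hT hca
    -- q's support only meets pth a b at c
    have hq_ab : ∀ x ∈ (pth hT vk c).support, x ∈ (pth hT a b).support → x = c := by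
      intro x hx hx2
      rw [← hq'] at hx
      exact hqfirst x hx hx2
    -- pth vk a = q ++ pth c a  (so F vk a = F vk c + F c a - w c)
    have hsupp_ca : (pth hT c a).support ⊆ (pth hT a b).support := by
      intro x hx
      rw [pth_reverse hT, SimpleGraph.Walk.support_reverse, List.mem_reverse] at hx
      exact hsub_ac hx
    have hpath_vka : ((pth hT vk c).append (pth hT c a)).IsPath := by
      refine append_isPath (pth_isPath hT vk c) (pth_isPath hT c a) ?_
      intro x hx hx2
      exact hq_ab x hx (hsupp_ca hx2)
    have hF_vka : F vk a = F vk c + F c a - w c := by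
      have := pth_eq hT _ hpath_vka
      rw [hF]; dsimp only
      rw [← this, walkWeight_append]
    -- pth vk b = q ++ pth c b
    have hpath_vkb : ((pth hT vk c).append (pth hT c b)).IsPath := by
      refine append_isPath (pth_isPath hT vk c) (pth_isPath hT c b) ?_
      intro x hx hx2
      exact hq_ab x hx (hsub_cb hx2)
    have hF_vkb : F vk b = F vk c + F c b - w c := by
      have := pth_eq hT _ hpath_vkb
      rw [hF]; dsimp only
      rw [← this, walkWeight_append]
    -- d : first vertex of the path v₀ → c lying on the "spider"
    set S' : Set V := {x | x ∈ (pth hT vk c).support ∨ x ∈ (pth hT c a).support ∨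
      x ∈ (pth hT c b).support} with hS'
    obtain ⟨d, r, hdS, hr, hrsub, hrfirst⟩ :=
      firstMeet S' (pth hT v₀ c) (pth_isPath hT v₀ c)
        (Or.inl (SimpleGraph.Walk.end_mem_support _))
    have hr' : r = pth hT v₀ d := pth_eq hT r hr
    have hrS' : ∀ x ∈ (pth hT v₀ d).support, x ∈ S' → x = d := by
      intro x hx hx2
      rw [← hr'] at hx
      exact hrfirst x hx hx2
    -- generic: if d is on a path c → t inside the spider, we get weight decompositions
    -- suffices : F c a ≤ F vk c ∨ F c b ≤ F vk c
    have main : F c a ≤ F vk c ∨ F c b ≤ F vk c := by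
      -- helper to build the path v₀ → d → (rest) when rest's support ⊆ S'
      have build : ∀ (t : V) (s : T.Walk d t), s.IsPath → (∀ x ∈ s.support, x ∈ S') →
          F v₀ t = F v₀ d + walkWeight w s - w d := by
        intro t s hs hsS
        have hpa : ((pth hT v₀ d).append s).IsPath := by
          refine append_isPath (pth_isPath hT v₀ d) hs ?_
          intro x hx hx2
          exact hrS' x hx (hsS x hx2)
        have := pth_eq hT _ hpa
        rw [hF]; dsimp only
        rw [← this, walkWeight_append]
      rcases hdS with hd | hd | hd
      · -- d on the leg vk → c
        -- F vk c = F vk d + F d c - w d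
        have h1 : F vk c = F vk d + F d c - w d := pth_weight_split hT w hd
        -- path d → c is inside the leg
        have hdc_sub : (pth hT d c).support ⊆ (pth hT vk c).support :=
          pth_support_split_right hT hd
        -- path d → c → a
        have hdca : ((pth hT d c).append (pth hT c a)).IsPath := by
          refine append_isPath (pth_isPath hT d c) (pth_isPath hT c a) ?_
          intro x hx hx2
          exact hq_ab x (hdc_sub hx) (hsupp_ca hx2)
        have hva : F v₀ a = F v₀ d + (F d c + F c a - w c) - w d := by
          have := build a ((pth hT d c).append (pth hT c a)) hdca (by
            intro x hx
            rw [SimpleGraph.Walk.mem_support_append_iff] at hx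
            rcases hx with hx | hx
            · exact Or.inl (hdc_sub hx)
            · exact Or.inr (Or.inl hx))
          rw [this, walkWeight_append]
        -- path d → vk : reverse of pth vk d; support inside leg
        have hdvk_sub : (pth hT d vk).support ⊆ (pth hT vk c).support := by
          intro x hx
          rw [pth_reverse hT, SimpleGraph.Walk.support_reverse, List.mem_reverse] at hx
          exact pth_support_split_left hT hd hx
        have hvvk : F v₀ vk = F v₀ d + F d vk - w d := by
          exact build vk (pth hT d vk) (pth_isPath hT d vk)
            (fun x hx => Or.inl (hdvk_sub hx))
        -- hmax at a
        have hma := hmax' a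
        rw [hva, hvvk] at hma
        -- F d c + F c a - w c ≤ F d vk
        have h2 : F d c + F c a - w c ≤ F d vk := by linarith
        have h3 : w d + w c ≤ 2 * F d c := by
          have := twice_le_walkWeight w hw (pth hT d c)
          exact this
        have h4 : F vk d = F d vk := walkWeight_pth_symm hT w d vk
        left
        -- F vk c = F vk d + F d c - w d ≥ (F d c + F c a - w c) + F d c - w d ≥ F c a
        linarith
      · -- d on the leg c → a : use hmax at b
        have hdc_sub : (pth hT d c).support ⊆ (pth hT c a).support := by
          intro x hx
          rw [pth_reverse hT, SimpleGraph.Walk.support_reverse, List.mem_reverse] at hx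
          exact pth_support_split_left hT hd hx
        -- path d → c → b
        have hdcb : ((pth hT d c).append (pth hT c b)).IsPath := by
          refine append_isPath (pth_isPath hT d c) (pth_isPath hT c b) ?_
          intro x hx hx2
          have hx' : x ∈ (pth hT a c).support := by
            rw [pth_reverse hT, SimpleGraph.Walk.support_reverse, List.mem_reverse]
            exact hdc_sub hx
          exact hdisj_ac_cb x hx' hx2
        have hvb : F v₀ b = F v₀ d + (F d c + F c b - w c) - w d := by
          have := build b ((pth hT d c).append (pth hT c b)) hdcb (by
            intro x hx
            rw [SimpleGraph.Walk.mem_support_append_iff] at hx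
            rcases hx with hx | hx
            · exact Or.inr (Or.inl (hdc_sub hx))
            · exact Or.inr (Or.inr hx))
          rw [this, walkWeight_append]
        -- path d → c → vk
        have hdcvk : ((pth hT d c).append (pth hT c vk)).IsPath := by
          refine append_isPath (pth_isPath hT d c) (pth_isPath hT c vk) ?_
          intro x hx hx2
          have hx' : x ∈ (pth hT vk c).support := by
            rw [pth_reverse hT, SimpleGraph.Walk.support_reverse, List.mem_reverse] at hx2
            exact hx2
          exact hq_ab x hx' (hsupp_ca (hdc_sub hx))
        have hvvk : F v₀ vk = F v₀ d + (F d c + F c vk - w c) - w d := by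
          have := build vk ((pth hT d c).append (pth hT c vk)) hdcvk (by
            intro x hx
            rw [SimpleGraph.Walk.mem_support_append_iff] at hx
            rcases hx with hx | hx
            · exact Or.inr (Or.inl (hdc_sub hx))
            · refine Or.inl ?_
              rw [pth_reverse hT, SimpleGraph.Walk.support_reverse, List.mem_reverse] at hx
              exact hx)
          rw [this, walkWeight_append]
        have hmb := hmax' b
        rw [hvb, hvvk] at hmb
        have h4 : F c vk = F vk c :=
          show walkWeight w (pth hT c vk) = walkWeight w (pth hT vk c) from
            walkWeight_pth_symm hT w vk c
        right
        linarith
      · -- d on the leg c → b : use hmax at a (symmetric)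
        have hdc_sub : (pth hT d c).support ⊆ (pth hT c b).support := by
          intro x hx
          rw [pth_reverse hT, SimpleGraph.Walk.support_reverse, List.mem_reverse] at hx
          exact pth_support_split_left hT hd hx
        -- path d → c → a
        have hdca : ((pth hT d c).append (pth hT c a)).IsPath := by
          refine append_isPath (pth_isPath hT d c) (pth_isPath hT c a) ?_
          intro x hx hx2
          have hx2' : x ∈ (pth hT a c).support := by
            rw [pth_reverse hT, SimpleGraph.Walk.support_reverse, List.mem_reverse]
            exact hx2
          exact hdisj_ac_cb x hx2' (hdc_sub hx)
        have hva : F v₀ a = F v₀ d + (F d c + F c a - w c) - w d := by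
          have := build a ((pth hT d c).append (pth hT c a)) hdca (by
            intro x hx
            rw [SimpleGraph.Walk.mem_support_append_iff] at hx
            rcases hx with hx | hx
            · exact Or.inr (Or.inr (hdc_sub hx))
            · exact Or.inr (Or.inl hx))
          rw [this, walkWeight_append]
        -- path d → c → vk
        have hdcvk : ((pth hT d c).append (pth hT c vk)).IsPath := by
          refine append_isPath (pth_isPath hT d c) (pth_isPath hT c vk) ?_
          intro x hx hx2
          have hx2' : x ∈ (pth hT vk c).support := by
            rw [pth_reverse hT, SimpleGraph.Walk.support_reverse, List.mem_reverse] at hx2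
            exact hx2
          exact hq_ab x hx2' (hsub_cb (hdc_sub hx))
        have hvvk : F v₀ vk = F v₀ d + (F d c + F c vk - w c) - w d := by
          have := build vk ((pth hT d c).append (pth hT c vk)) hdcvk (by
            intro x hx
            rw [SimpleGraph.Walk.mem_support_append_iff] at hx
            rcases hx with hx | hx
            · exact Or.inr (Or.inr (hdc_sub hx))
            · refine Or.inl ?_
              rw [pth_reverse hT, SimpleGraph.Walk.support_reverse, List.mem_reverse] at hx
              exact hx)
          rw [this, walkWeight_append]
        have hma := hmax' a
        rw [hva, hvvk] at hma
        have h4 : F c vk = F vk c :=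
          show walkWeight w (pth hT c vk) = walkWeight w (pth hT vk c) from
            walkWeight_pth_symm hT w vk c
        left
        linarith
    -- conclude
    rcases main with h | h
    · -- F a b = F a c + F c b - w c ≤ F vk c + F c b - w c = F vk b
      have hac : F a c = F c a :=
        show walkWeight w (pth hT a c) = walkWeight w (pth hT c a) from
          walkWeight_pth_symm hT w c a
      have : F a b ≤ F vk b := by rw [hsplit_ab, hF_vkb]; linarith
      exact le_trans this (le_max_right _ _)
    · have hac : F a c = F c a :=
        show walkWeight w (pth hT a c) = walkWeight w (pth hT c a) from
          walkWeight_pth_symm hT w c a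
      have : F a b ≤ F vk a := by rw [hsplit_ab, hF_vka]; linarith
      exact le_trans this (le_max_left _ _)
  -- pick the heaviest path starting at vk
  obtain ⟨u, hu⟩ := Finite.exists_max (fun u : V => F vk u)
  refine ⟨u, pth hT vk u, pth_isPath hT vk u, ?_⟩
  intro a b R hR
  have hR' : R = pth hT a b := pth_eq hT R hR
  have h1 : walkWeight w R = F a b := by rw [hR']
  have h2 : F a b ≤ max (F vk a) (F vk b) := key a b
  have h3 : max (F vk a) (F vk b) ≤ F vk u := max_le (hu a) (hu b)
  calc walkWeight w R = F a b := h1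
    _ ≤ max (F vk a) (F vk b) := h2
    _ ≤ F vk u := h3
    _ = walkWeight w (pth hT vk u) := rfl
end

section
/- In any finite tree T with vertex set V and a function B : V → V such that B(u) ≠ u for all u, there exists an edge {a, b} of T such that B(a) lies in the component of T − a containing b and B(b) lies in the component of T − b containing a. -/
open SimpleGraph

lemma walk_induce_reachable {V : Type*} (G : SimpleGraph V) (s : Set V) :
    ∀ {a b : V} (p : G.Walk a b), (∀ x ∈ p.support, x ∈ s) →
    ∀ (ha : a ∈ s) (hb : b ∈ s), (G.induce s).Reachable ⟨a, ha⟩ ⟨b, hb⟩ := by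
  intro a b p
  induction p with
  | nil => intro _ ha hb; rfl
  | @cons u v w h q ih =>
    intro hp ha hb
    have hv : v ∈ s := hp v (by simp)
    have hadj : (G.induce s).Adj ⟨u, ha⟩ ⟨v, hv⟩ := by
      simp [SimpleGraph.comap_adj, h]
    exact hadj.reachable.trans (ih (fun x hx => hp x (by simp [hx])) hv hb)

theorem stmt_16 {V : Type*} [Fintype V] (T : SimpleGraph V) (hT : T.IsTree)
    (B : V → V) (hB : ∀ u, B u ≠ u) :
    ∃ (a b : V) (hab : T.Adj a b),
      (T.induce {x | x ≠ a}).Reachable ⟨b, hab.ne'⟩ ⟨B a, hB a⟩ ∧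
      (T.induce {x | x ≠ b}).Reachable ⟨a, hab.ne⟩ ⟨B b, hB b⟩ := by
  classical
  -- For each u, pick the first step of the path from u to B u.
  have key : ∀ u : V, ∃ w, ∃ hw : w ≠ u, T.Adj u w ∧
      (T.induce {x | x ≠ u}).Reachable ⟨w, hw⟩ ⟨B u, hB u⟩ := by
    intro u
    obtain ⟨w0⟩ := hT.isConnected.preconnected u (B u)
    obtain ⟨p, hp⟩ := w0.toPath
    have hnn : ¬ p.Nil := SimpleGraph.Walk.not_nil_of_ne (hB u).symm
    obtain ⟨w, h, q, rfl⟩ := SimpleGraph.Walk.not_nil_iff.mp hnn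
    have hu : u ∉ q.support := by
      have := hp.2
      simp [SimpleGraph.Walk.support_cons] at this
      exact this.1
    refine ⟨w, h.ne', h, walk_induce_reachable T _ q (fun x hx => ?_) ?_ (hB u)⟩
    · intro hxu; exact hu (hxu ▸ hx)
    · exact h.ne'
  choose f hfne hfadj hfreach using key
  -- Pigeonhole on edges
  have hne : Nonempty V := hT.isConnected.nonempty
  have hcard : Fintype.card T.edgeSet < Fintype.card V := by
    have h1 : T.edgeFinset.card + 1 = Fintype.card V := hT.card_edgeFinset
    have h2 : T.edgeFinset.card = Fintype.card T.edgeSet := Set.toFinset_card _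
    omega
  have : ¬ Function.Injective (fun u : V => (⟨s(u, f u), (hfadj u)⟩ : T.edgeSet)) := by
    intro hinj
    exact absurd (Fintype.card_le_of_injective _ hinj) (not_le.mpr hcard)
  rw [Function.not_injective_iff] at this
  obtain ⟨a, b, hab, hne2⟩ := this
  have hs : s(a, f a) = s(b, f b) := congrArg Subtype.val hab
  rw [Sym2.eq_iff] at hs
  rcases hs with ⟨rfl, _⟩ | ⟨h1, h2⟩
  · exact absurd rfl hne2
  have hadj : T.Adj a b := h2 ▸ hfadj a
  refine ⟨a, b, hadj, ?_, ?_⟩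
  · have e1 : (⟨b, hadj.ne'⟩ : {x | x ≠ a}) = ⟨f a, hfne a⟩ := Subtype.ext h2.symm
    rw [e1]; exact hfreach a
  · have e2 : (⟨a, hadj.ne⟩ : {x | x ≠ b}) = ⟨f b, hfne b⟩ := Subtype.ext h1
    rw [e2]; exact hfreach b
end
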